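/- Retracts of cop-win graphs are cop-win: if G is a finite cop-win (dismantlable) graph and H is a retract of G (there is a graph homomorphism r: G → H with H an induced subgraph of G and r restricted to H the identity), then H is cop-win. -/

import Mathlib

/-- The closed neighbourhood `N[v]` of a vertex. -/
def closedNbhd {V : Type*} (G : SimpleGraph V) (v : V) : Set V :=
  insert v {u | G.Adj v u}

/-- `v` dominates `u`: `N[v] ⊇ N[u]`. -/
def Dominates {V : Type*} (G : SimpleGraph V) (v u : V) : Prop :=
  closedNbhd G u ⊆ closedNbhd G v

/-- `v` dominates `u` in the subgraph induced on `S`. -/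
def DominatesOn {V : Type*} (G : SimpleGraph V) (S : Set V) (v u : V) : Prop :=
  ∀ w ∈ S, w ∈ closedNbhd G u → w ∈ closedNbhd G v

/-- A (finite) graph is dismantlable: its vertices can be ordered `v_1, …, v_n` so that
for each `i < n` some later `v_j` dominates `v_i` in the subgraph induced on
`{v_i, …, v_n}`. -/
def Dismantlable {V : Type*} (G : SimpleGraph V) : Prop :=
  ∃ (n : ℕ) (e : Fin n ≃ V), ∀ i : Fin n, (i : ℕ) + 1 < n →
    ∃ j : Fin n, i < j ∧
      DominatesOn G {w | ∃ k : Fin n, i ≤ k ∧ e k = w} (e j) (e i)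

/-- A full-information cop strategy: an initial vertex, and a move function taking the
current cop and robber positions to a new cop position, which must be the current one or
an adjacent one. -/
structure CopStrategy {V : Type*} (G : SimpleGraph V) where
  init : V
  move : V → V → V
  valid : ∀ c r, move c r = c ∨ G.Adj c (move c r)

/-- A full-information robber strategy: an initial vertex chosen knowing the cop's start,
and a move function taking the cop's (just updated) position and the robber's position to
a new robber position, which must be the current one or an adjacent one. -/
structure RobberStrategy {V : Type*} (G : SimpleGraph V) where
  init : V → V
  move : V → V → V
  valid : ∀ c r, move c r = r ∨ G.Adj r (move c r)

/-- The pair of (cop, robber) positions after `k` full rounds of play: the cop moves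
first in each round, then the robber responds. -/
def play {V : Type*} (G : SimpleGraph V) (cs : CopStrategy G) (rs : RobberStrategy G) :
    ℕ → V × V
  | 0 => (cs.init, rs.init cs.init)
  | k + 1 =>
      let p := play G cs rs k
      let c' := cs.move p.1 p.2
      (c', rs.move c' p.2)

/-- The cop wins: there is a cop strategy such that against every robber strategy, at some
round the cop's move lands on the robber's current vertex. -/
def CopWin {V : Type*} (G : SimpleGraph V) : Prop :=
  ∃ cs : CopStrategy G, ∀ rs : RobberStrategy G,
    ∃ k : ℕ, (play G cs rs (k + 1)).1 = (play G cs rs k).2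

/-! ### Auxiliary machinery -/

/-- The cop can force a capture from the state (cop at `c`, robber at `ρ`, cop to move). -/
inductive CWin {V : Type*} (G : SimpleGraph V) : V → V → Prop
  | capture (c ρ c' : V) (h1 : c' = c ∨ G.Adj c c') (h2 : c' = ρ) : CWin G c ρ
  | step (c ρ c' : V) (h1 : c' = c ∨ G.Adj c c')
      (h2 : ∀ ρ', (ρ' = ρ ∨ G.Adj ρ ρ') → CWin G c' ρ') : CWin G c ρ

/-- The cop can force a capture within `n` cop moves. -/
def CWn {V : Type*} (G : SimpleGraph V) : ℕ → V → V → Prop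
  | 0, _, _ => False
  | n+1, c, ρ => ∃ c', (c' = c ∨ G.Adj c c') ∧
      (c' = ρ ∨ ∀ ρ', (ρ' = ρ ∨ G.Adj ρ ρ') → CWn G n c' ρ')

lemma CWn_mono {V : Type*} (G : SimpleGraph V) :
    ∀ {m n : ℕ}, m ≤ n → ∀ {c ρ : V}, CWn G m c ρ → CWn G n c ρ := by
  intro m
  induction m with
  | zero => intro n _ c ρ h; exact h.elim
  | succ m ih =>
    intro n hmn c ρ h
    obtain ⟨n, rfl⟩ : ∃ n', n = n' + 1 := ⟨n - 1, by omega⟩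
    obtain ⟨c', h1, h2⟩ := h
    exact ⟨c', h1, h2.imp id (fun h ρ' hρ' => ih (by omega) (h ρ' hρ'))⟩

lemma CWin_exists_CWn {V : Type*} [Finite V] (G : SimpleGraph V) {c ρ : V}
    (h : CWin G c ρ) : ∃ n, CWn G n c ρ := by
  classical
  have : Fintype V := Fintype.ofFinite V
  induction h with
  | capture c ρ c' h1 h2 => exact ⟨1, c', h1, Or.inl h2⟩
  | step c ρ c' h1 h2 ih =>
    choose f hf using ih
    set g : V → ℕ := fun ρ' => if h : ρ' = ρ ∨ G.Adj ρ ρ' then f ρ' h else 0 with hg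
    refine ⟨Finset.univ.sup g + 1, c', h1, Or.inr fun ρ' hρ' => ?_⟩
    have hle : g ρ' ≤ Finset.univ.sup g := Finset.le_sup (Finset.mem_univ ρ')
    rw [hg] at hle
    simp only [dif_pos hρ'] at hle
    exact CWn_mono G hle (hf ρ' hρ')

open Classical in
lemma CWn_find_step {V : Type*} (G : SimpleGraph V) {c ρ : V}
    (h : ∃ n, CWn G n c ρ) :
    ∃ c', (c' = c ∨ G.Adj c c') ∧ (c' = ρ ∨ ∀ ρ', (ρ' = ρ ∨ G.Adj ρ ρ') →
      ∃ h' : ∃ n, CWn G n c' ρ', Nat.find h' < Nat.find h) := by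
  have hs := Nat.find_spec h
  obtain ⟨m, hm⟩ : ∃ m, Nat.find h = m + 1 := by
    cases hN : Nat.find h with
    | zero => rw [hN] at hs; exact hs.elim
    | succ m => exact ⟨m, rfl⟩
  rw [hm] at hs
  obtain ⟨c', h1, h2⟩ := hs
  refine ⟨c', h1, h2.imp id fun h2 ρ' hρ' => ?_⟩
  have hcw : CWn G m c' ρ' := h2 ρ' hρ'
  refine ⟨⟨m, hcw⟩, ?_⟩
  have hle : Nat.find (⟨m, hcw⟩ : ∃ n, CWn G n c' ρ') ≤ m := Nat.find_le hcw
  omega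

open Classical in
/-- A positional cop move: if the cop can still win, pick a rank-decreasing move. -/
noncomputable def copMove {V : Type*} (G : SimpleGraph V) (c ρ : V) : V :=
  if h : ∃ n, CWn G n c ρ then (CWn_find_step G h).choose else c

lemma copMove_valid {V : Type*} (G : SimpleGraph V) (c ρ : V) :
    copMove G c ρ = c ∨ G.Adj c (copMove G c ρ) := by
  unfold copMove
  split
  · exact (CWn_find_step G ‹_›).choose_spec.1
  · exact Or.inl rfl

lemma play_succ {V : Type*} (G : SimpleGraph V) (cs : CopStrategy G)
    (rs : RobberStrategy G) (k : ℕ) :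
    play G cs rs (k + 1) =
      (cs.move (play G cs rs k).1 (play G cs rs k).2,
       rs.move (cs.move (play G cs rs k).1 (play G cs rs k).2) (play G cs rs k).2) := rfl

open Classical in
lemma copWin_of_CWin {V : Type*} [Finite V] (G : SimpleGraph V) (c0 : V)
    (h0 : ∀ ρ, CWin G c0 ρ) : CopWin G := by
  classical
  refine ⟨⟨c0, copMove G, copMove_valid G⟩, fun rs => ?_⟩
  set cs : CopStrategy G := ⟨c0, copMove G, copMove_valid G⟩ with hcs
  suffices H : ∀ N (c ρ : V) (h : ∃ n, CWn G n c ρ), Nat.find h ≤ N →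
      ∀ k, play G cs rs k = (c, ρ) →
      ∃ j, (play G cs rs (j + 1)).1 = (play G cs rs j).2 by
    have h : ∃ n, CWn G n c0 (rs.init c0) := CWin_exists_CWn G (h0 (rs.init c0))
    exact H (Nat.find h) c0 (rs.init c0) h le_rfl 0 rfl
  intro N
  induction N using Nat.strong_induction_on with
  | _ N ih =>
    intro c ρ h hN k hk
    have hmove : copMove G c ρ = (CWn_find_step G h).choose := by
      rw [copMove, dif_pos h]
    obtain ⟨h1, h2⟩ := (CWn_find_step G h).choose_spec
    rcases h2 with h2 | h2
    · refine ⟨k, ?_⟩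
      rw [play_succ, hk]
      exact hmove.trans h2
    · set c' := (CWn_find_step G h).choose with hc'
      set ρ' := rs.move c' ρ with hρ'
      have hval : ρ' = ρ ∨ G.Adj ρ ρ' := rs.valid c' ρ
      obtain ⟨h', hlt⟩ := h2 ρ' hval
      have hplay : play G cs rs (k + 1) = (c', ρ') := by
        rw [play_succ, hk]
        exact congrArg (fun x => (x, rs.move x ρ)) hmove
      exact ih (Nat.find h') (lt_of_lt_of_le hlt hN) c' ρ' h' le_rfl (k + 1) hplay

open Classical in
/-- A robber move preserving safety, when possible. -/
noncomputable def robMove {V : Type*} (G : SimpleGraph V) (c ρ : V) : V :=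
  if h : ∃ ρ', (ρ' = ρ ∨ G.Adj ρ ρ') ∧ ¬ CWin G c ρ' then h.choose else ρ

lemma robMove_valid {V : Type*} (G : SimpleGraph V) (c ρ : V) :
    robMove G c ρ = ρ ∨ G.Adj ρ (robMove G c ρ) := by
  unfold robMove
  split
  next h => exact h.choose_spec.1
  next => exact Or.inl rfl

lemma not_CWin_step {V : Type*} (G : SimpleGraph V) {c ρ : V} (hcw : ¬ CWin G c ρ)
    (c' : V) (hc' : c' = c ∨ G.Adj c c') :
    c' ≠ ρ ∧ ∃ ρ', (ρ' = ρ ∨ G.Adj ρ ρ') ∧ ¬ CWin G c' ρ' := by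
  constructor
  · rintro rfl
    exact hcw (CWin.capture _ _ c' hc' rfl)
  · by_contra hx
    push_neg at hx
    exact hcw (CWin.step c ρ c' hc' fun ρ' hρ' => hx ρ' hρ')

lemma CWin_of_copWin {V : Type*} (G : SimpleGraph V) (cs : CopStrategy G)
    (hw : ∀ rs : RobberStrategy G,
      ∃ k, (play G cs rs (k + 1)).1 = (play G cs rs k).2) (ρ0 : V) :
    CWin G cs.init ρ0 := by
  classical
  by_contra h0
  set rs : RobberStrategy G := ⟨fun _ => ρ0, robMove G, robMove_valid G⟩ with hrs
  have hinv : ∀ k, ¬ CWin G (play G cs rs k).1 (play G cs rs k).2 := by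
    intro k
    induction k with
    | zero => exact h0
    | succ k ih =>
      obtain ⟨_, hex⟩ := not_CWin_step G ih (cs.move (play G cs rs k).1 (play G cs rs k).2)
        (cs.valid _ _)
      rw [play_succ]
      show ¬ CWin G _ (robMove G _ _)
      rw [robMove, dif_pos hex]
      exact hex.choose_spec.2
  obtain ⟨k, hk⟩ := hw rs
  obtain ⟨hne, -⟩ := not_CWin_step G (hinv k)
    (cs.move (play G cs rs k).1 (play G cs rs k).2) (cs.valid _ _)
  exact hne hk

lemma CWin_retract {V : Type*} {S : Set V} (G : SimpleGraph V) (r : V → S)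
    (hhom : ∀ a b : V, G.Adj a b → r a = r b ∨ (G.induce S).Adj (r a) (r b))
    (hfix : ∀ s : S, r (s : V) = s) :
    ∀ {c ρ : V}, CWin G c ρ → ∀ (hρ : ρ ∈ S), CWin (G.induce S) (r c) ⟨ρ, hρ⟩ := by
  intro c ρ h
  induction h with
  | capture c ρ c' h1 h2 =>
    intro hρ
    refine CWin.capture _ _ (r c') ?_ ?_
    · rcases h1 with rfl | h1
      · exact Or.inl rfl
      · exact (hhom c c' h1).imp Eq.symm id
    · subst h2
      exact hfix ⟨c', hρ⟩
  | step c ρ c' h1 h2 ih =>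
    intro hρ
    refine CWin.step _ _ (r c') ?_ ?_
    · rcases h1 with rfl | h1
      · exact Or.inl rfl
      · exact (hhom c c' h1).imp Eq.symm id
    · intro σ hσ
      have hσ' : (σ : V) = ρ ∨ G.Adj ρ (σ : V) := by
        rcases hσ with he | ha
        · exact Or.inl (by rw [he])
        · exact Or.inr ha
      exact ih (σ : V) hσ' σ.2

/-- retracts of cop-win graphs are cop-win. `S` induces the subgraph `H`,
and `r` is a retraction of `G` onto `H` (a homomorphism in the reflexive sense, fixing
`S` pointwise). -/
theorem retract_copWin {V : Type*} [Finite V] [Nonempty V] (G : SimpleGraph V)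
    (S : Set V) (r : V → S)
    (hhom : ∀ a b : V, G.Adj a b → r a = r b ∨ (G.induce S).Adj (r a) (r b))
    (hfix : ∀ s : S, r (s : V) = s)
    (hc : CopWin G) : CopWin (G.induce S) := by
  obtain ⟨cs, hw⟩ := hc
  have hA : ∀ ρ : V, CWin G cs.init ρ := CWin_of_copWin G cs hw
  exact copWin_of_CWin (G.induce S) (r cs.init)
    (fun σ => CWin_retract G r hhom hfix (hA (σ : V)) σ.2)
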